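/- arXiv:2507.00244 — 2 statements merged into one kernel-verified Lean document; each statement's English description precedes it below -/
import Mathlib

section
/- The composition of a fission followed by a fusion need not return the original morphological tree: there exists a morphological tree S with root bundle B_v, a subset A ⊆ B_v, and a partition B_v \ A = B₁ ⊔ B₂ such that the graft M^morph(S_{B₁∪A}, S_{B₂∪A}) of the two fissioned trees is not equal to S. -/
/-- Morphological trees with `F`-labeled leaves. -/
inductive MTree (F : Type) : Type
  | leaf : F → MTree F
  | node : MTree F → MTree F → MTree F
  deriving DecidableEq

def MTree.bundle {F : Type} [DecidableEq F] : MTree F → Finset F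
  | .leaf μ => {μ}
  | .node l r => l.bundle ∪ r.bundle

/-- Restriction of a morphological tree to a feature set `C`: intersect every
vertex bundle with `C`, delete maximal subtrees whose bundle becomes empty, and
contract the resulting trivial non-branching vertices.  Returns `none` if the
whole tree is deleted.  `restrict S (Bᵢ ∪ A)` is the fissioned tree
`S_{Bᵢ∪A}`. -/
def MTree.restrict {F : Type} [DecidableEq F] :
    MTree F → Finset F → Option (MTree F)
  | .leaf μ, C => if μ ∈ C then some (.leaf μ) else none
  | .node l r, C =>
    match l.restrict C, r.restrict C with
    | some l', some r' => some (.node l' r')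
    | some l', none => some l'
    | none, o => o

/-- The composition of a fission followed by a fusion need not return the
original morphological tree: there exist a morphological tree `S` with root
bundle `B_v`, a subset `A ⊆ B_v` and a partition `B_v \ A = B₁ ⊔ B₂` such that
the graft `M^morph(S_{B₁∪A}, S_{B₂∪A})` of the two fissioned trees is not equal
to `S` (in either order of the unordered graft). -/
theorem fission_then_fusion_not_identity :
    ∃ (S : MTree (Fin 4)) (A B₁ B₂ : Finset (Fin 4))
      (S₁ S₂ : MTree (Fin 4)),
      A ⊆ S.bundle ∧
      Disjoint B₁ B₂ ∧
      B₁ ∪ B₂ = S.bundle \ A ∧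
      S.restrict (B₁ ∪ A) = some S₁ ∧
      S.restrict (B₂ ∪ A) = some S₂ ∧
      MTree.node S₁ S₂ ≠ S ∧ MTree.node S₂ S₁ ≠ S := by
  refine ⟨.node (.node (.leaf 0) (.leaf 1)) (.node (.leaf 2) (.leaf 3)),
    {0}, {3}, {1, 2}, .node (.leaf 0) (.leaf 3),
    .node (.node (.leaf 0) (.leaf 1)) (.leaf 2), ?_, ?_, ?_, ?_, ?_, ?_, ?_⟩ <;>
    decide
end

section
/- Syntactic objects with head functions form a colored operad with color set SO₀: defining the color of the root of (T, h_T) to be the label α_{h_T(r)} at the head leaf and the color of each leaf ℓ its label α_ℓ, the insertion of (T′, h_{T′}) at a leaf ℓ of (T, h_T) is defined exactly when the root color of T′ equals the leaf color α_ℓ, and these color-matching insertions satisfy the colored operad associativity and unit axioms. -/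
/-- Syntactic objects endowed with a head function: at each internal vertex,
the Boolean records which of the two children projects (`false` = left child
is the head, `true` = right child is the head).  This encodes exactly the
coherence condition that the head of a vertex is the head of exactly one of
its children. -/
inductive HTree (X : Type) : Type
  | leaf : X → HTree X
  | node : Bool → HTree X → HTree X → HTree X

def HTree.numLeaves {X : Type} : HTree X → ℕ
  | .leaf _ => 1
  | .node _ l r => l.numLeaves + r.numLeaves

/-- The label of the `i`-th leaf (0-indexed): the color of the `i`-th input. -/
def HTree.labelAt {X : Type} : HTree X → ℕ → X
  | .leaf x, _ => x
  | .node _ l r, i =>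
    if i < l.numLeaves then l.labelAt i else r.labelAt (i - l.numLeaves)

/-- The label induced at the root by the head function (the labeling
algorithm): the color of the output. -/
def HTree.headLabel {X : Type} : HTree X → X
  | .leaf x => x
  | .node b l r => if b then r.headLabel else l.headLabel

/-- Grafting the root of `T'` onto the `i`-th leaf of `T` (color-matching
insertion of the colored operad, total on underlying data). -/
def HTree.graftAt {X : Type} : HTree X → ℕ → HTree X → HTree X
  | .leaf _, 0, T' => T'
  | .leaf x, _ + 1, _ => .leaf x
  | .node b l r, i, T' =>
    if i < l.numLeaves then .node b (l.graftAt i T') r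
    else .node b l (r.graftAt (i - l.numLeaves) T')

namespace HTree
variable {X : Type}

theorem numLeaves_pos (T : HTree X) : 0 < T.numLeaves := by
  induction T with
  | leaf x => simp [numLeaves]
  | node b l r ihl ihr => simp only [numLeaves]; omega

theorem numLeaves_graftAt (T T' : HTree X) (i : ℕ) (h : i < T.numLeaves) :
    (T.graftAt i T').numLeaves = T.numLeaves + T'.numLeaves - 1 := by
  induction T generalizing i with
  | leaf x =>
    simp only [numLeaves] at h
    interval_cases i
    simp [graftAt, numLeaves]
  | node b l r ihl ihr =>
    simp only [numLeaves] at h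
    have hl := l.numLeaves_pos; have hr := r.numLeaves_pos; have hT := T'.numLeaves_pos
    by_cases hi : i < l.numLeaves
    · rw [graftAt, if_pos hi]
      simp only [numLeaves, ihl _ hi]; omega
    · rw [graftAt, if_neg hi]
      simp only [numLeaves, ihr (i - l.numLeaves) (by omega)]; omega

theorem headLabel_graftAt (T T' : HTree X) (i : ℕ) (h : i < T.numLeaves)
    (hc : T'.headLabel = T.labelAt i) :
    (T.graftAt i T').headLabel = T.headLabel := by
  induction T generalizing i with
  | leaf x =>
    simp only [numLeaves] at h
    interval_cases i
    simpa [graftAt, labelAt, headLabel] using hc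
  | node b l r ihl ihr =>
    simp only [numLeaves] at h
    by_cases hi : i < l.numLeaves
    · rw [graftAt, if_pos hi]
      cases b with
      | false =>
        simp only [headLabel, if_neg (by simp : ¬ (false : Bool) = true)]
        exact ihl _ hi (by rwa [labelAt, if_pos hi] at hc)
      | true => simp [headLabel]
    · rw [graftAt, if_neg hi]
      cases b with
      | false => simp [headLabel]
      | true =>
        simp only [headLabel, if_pos rfl]
        exact ihr _ (by omega) (by rwa [labelAt, if_neg hi] at hc)

theorem graftAt_leaf_labelAt (T : HTree X) (i : ℕ) (h : i < T.numLeaves) :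
    T.graftAt i (HTree.leaf (T.labelAt i)) = T := by
  induction T generalizing i with
  | leaf x => simp only [numLeaves] at h; interval_cases i; simp [graftAt, labelAt]
  | node b l r ihl ihr =>
    simp only [numLeaves] at h
    by_cases hi : i < l.numLeaves
    · rw [labelAt, if_pos hi, graftAt, if_pos hi, ihl _ hi]
    · rw [labelAt, if_neg hi, graftAt, if_neg hi, ihr _ (by omega)]

theorem graft_parallel (T Y Z : HTree X) (i j : ℕ) (hij : i < j) (hj : j < T.numLeaves) :
    (T.graftAt j Y).graftAt i Z =
      (T.graftAt i Z).graftAt (j + Z.numLeaves - 1) Y := by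
  induction T generalizing i j with
  | leaf x => simp only [numLeaves] at hj; omega
  | node b l r ihl ihr =>
    simp only [numLeaves] at hj
    have hZ := Z.numLeaves_pos; have hY := Y.numLeaves_pos
    have hl := l.numLeaves_pos; have hr := r.numLeaves_pos
    by_cases hjl : j < l.numLeaves
    · have hil : i < l.numLeaves := by omega
      rw [graftAt, if_pos hjl, graftAt, if_pos (show i < (l.graftAt j Y).numLeaves by
            rw [numLeaves_graftAt _ _ _ hjl]; omega),
          graftAt, if_pos hil, graftAt, if_pos (show j + Z.numLeaves - 1 < (l.graftAt i Z).numLeaves by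
            rw [numLeaves_graftAt _ _ _ hil]; omega),
          ihl _ _ hij hjl]
    · by_cases hil : i < l.numLeaves
      · rw [graftAt, if_neg hjl, graftAt, if_pos hil, graftAt, if_pos hil,
            graftAt, if_neg (show ¬ j + Z.numLeaves - 1 < (l.graftAt i Z).numLeaves by
              rw [numLeaves_graftAt _ _ _ hil]; omega),
            numLeaves_graftAt _ _ _ hil,
            show j + Z.numLeaves - 1 - (l.numLeaves + Z.numLeaves - 1) = j - l.numLeaves by omega]
      · rw [graftAt, if_neg hjl, graftAt, if_neg hil, graftAt, if_neg hil,
            graftAt, if_neg (show ¬ j + Z.numLeaves - 1 < l.numLeaves by omega),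
            show j + Z.numLeaves - 1 - l.numLeaves = (j - l.numLeaves) + Z.numLeaves - 1 by omega,
            ihr _ _ (by omega) (by omega)]

theorem graft_nested (T Y Z : HTree X) (i j : ℕ) (hji : j ≤ i) (hiY : i < j + Y.numLeaves)
    (hj : j < T.numLeaves) :
    (T.graftAt j Y).graftAt i Z = T.graftAt j (Y.graftAt (i - j) Z) := by
  induction T generalizing i j with
  | leaf x =>
    simp only [numLeaves] at hj
    interval_cases j
    simp only [graftAt, Nat.sub_zero]
  | node b l r ihl ihr =>
    simp only [numLeaves] at hj
    have hY := Y.numLeaves_pos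
    have hl := l.numLeaves_pos; have hr := r.numLeaves_pos
    by_cases hjl : j < l.numLeaves
    · rw [graftAt, if_pos hjl, graftAt, if_pos (show i < (l.graftAt j Y).numLeaves by
            rw [numLeaves_graftAt _ _ _ hjl]; omega),
          graftAt, if_pos hjl, ihl _ _ hji hiY hjl]
    · rw [graftAt, if_neg hjl, graftAt, if_neg (show ¬ i < l.numLeaves by omega),
          graftAt, if_neg hjl,
          ihr _ _ (by omega) (by omega) (by omega),
          show i - l.numLeaves - (j - l.numLeaves) = i - j by omega]

end HTree

/-- Syntactic objects with head functions form a colored operad with color set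
`SO₀`: the output color of `(T, h_T)` is the label at the head leaf, the input
colors are the leaf labels, insertion at a leaf is performed when the root
color of the inserted tree matches the leaf color, and these color-matching
insertions satisfy the colored operad unit and associativity axioms (and
preserve the output color and the grading). -/
theorem headed_syntactic_objects_colored_operad (X : Type) :
    -- colors are preserved: output color and arity of a color-matching insertion
    (∀ (T T' : HTree X) (i : ℕ), i < T.numLeaves →
      T'.headLabel = T.labelAt i →
      (T.graftAt i T').headLabel = T.headLabel ∧
      (T.graftAt i T').numLeaves = T.numLeaves + T'.numLeaves - 1) ∧
    -- left unit: the single-leaf tree of color c is a left unit (colors match)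
    (∀ (T' : HTree X) (c : X), T'.headLabel = c →
      (HTree.leaf c).graftAt 0 T' = T') ∧
    -- right unit: inserting the unit of the matching color changes nothing
    (∀ (T : HTree X) (i : ℕ), i < T.numLeaves →
      T.graftAt i (HTree.leaf (T.labelAt i)) = T) ∧
    -- associativity, parallel case i < j (with color matching)
    (∀ (T Y Z : HTree X) (i j : ℕ), i < j → j < T.numLeaves →
      Y.headLabel = T.labelAt j → Z.headLabel = T.labelAt i →
      (T.graftAt j Y).graftAt i Z =
        (T.graftAt i Z).graftAt (j + Z.numLeaves - 1) Y) ∧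
    -- associativity, nested case j ≤ i < j + |Y| (with color matching)
    (∀ (T Y Z : HTree X) (i j : ℕ), j ≤ i → i < j + Y.numLeaves →
      j < T.numLeaves →
      Y.headLabel = T.labelAt j → Z.headLabel = Y.labelAt (i - j) →
      (T.graftAt j Y).graftAt i Z = T.graftAt j (Y.graftAt (i - j) Z)) ∧
    -- associativity, parallel case i ≥ j + |Y| (with color matching)
    (∀ (T Y Z : HTree X) (i j : ℕ), j + Y.numLeaves ≤ i →
      i < T.numLeaves + Y.numLeaves - 1 → j < T.numLeaves →
      Y.headLabel = T.labelAt j →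
      Z.headLabel = T.labelAt (i - Y.numLeaves + 1) →
      (T.graftAt j Y).graftAt i Z =
        (T.graftAt (i - Y.numLeaves + 1) Z).graftAt j Y) := by
  refine ⟨fun T T' i h hc => ⟨HTree.headLabel_graftAt T T' i h hc,
      HTree.numLeaves_graftAt T T' i h⟩,
    fun T' c _ => rfl,
    fun T i h => HTree.graftAt_leaf_labelAt T i h,
    fun T Y Z i j hij hj _ _ => HTree.graft_parallel T Y Z i j hij hj,
    fun T Y Z i j hji hiY hj _ _ => HTree.graft_nested T Y Z i j hji hiY hj,
    fun T Y Z i j h1 h2 hj _ _ => ?_⟩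
  have hY := Y.numLeaves_pos
  have := HTree.graft_parallel T Z Y j (i - Y.numLeaves + 1) (by omega) (by omega)
  rw [this, show i - Y.numLeaves + 1 + Y.numLeaves - 1 = i by omega]
end
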